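/- Let c be a multiterminal cut partition of G into blocks indexed by {1, …, k}, and for a non-terminal vertex v in block c(v) define its gain toward block i ≠ c(v) as g_i(v) = w(v, block i) − w(v, block c(v) \ {v}), and g(v) = max_{i ≠ c(v)} g_i(v). Let u, v ∈ V \ T be adjacent non-terminal vertices lying in the same block j, and let i ≠ j be a block attaining the maximum gain for both u and v. If g(u) + g(v) + 2·w(u, v) > 0, then the multiterminal cut partition obtained from c by moving both u and v to block i has weight equal to the weight of c minus (g(u) + g(v) + 2·w(u, v)); in particular its weight is strictly smaller. -/

import Mathlib

/-- The weight of the multiterminal cut induced by a partition `c` of the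
vertices into `k` blocks: the total weight of (unordered) edges whose
endpoints lie in different blocks. -/
def mtcWeight {V : Type*} [Fintype V] [DecidableEq V] {k : ℕ}
    (w : Sym2 V → ℕ) (c : V → Fin k) : ℕ :=
  ∑ p ∈ Finset.univ.sym2, if (Sym2.map c p).IsDiag then 0 else w p

/-- The minimum multiterminal cut weight `𝒲(G)` for terminals `t`. -/
noncomputable def minMTC {V : Type*} [Fintype V] [DecidableEq V] {k : ℕ}
    (w : Sym2 V → ℕ) (t : Fin k → V) : ℕ :=
  sInf {n | ∃ c : V → Fin k, (∀ i, c (t i) = i) ∧ mtcWeight w c = n}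

/-- `w(v, block i \ {v})` with respect to the partition `c`: the total weight
of edges joining `v` to the vertices of block `i` other than `v` itself. -/
def blockWeight {V : Type*} [Fintype V] [DecidableEq V] {k : ℕ}
    (w : Sym2 V → ℕ) (c : V → Fin k) (v : V) (i : Fin k) : ℕ :=
  ∑ y ∈ Finset.univ.filter (fun y : V => c y = i ∧ y ≠ v), w s(v, y)

/-- The gain `g_i(v) = w(v, block i) − w(v, block c(v) \ {v})` of moving `v`
from its block `c v` to block `i`. -/
def gain {V : Type*} [Fintype V] [DecidableEq V] {k : ℕ}
    (w : Sym2 V → ℕ) (c : V → Fin k) (v : V) (i : Fin k) : ℤ :=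
  (blockWeight w c v i : ℤ) - (blockWeight w c v (c v) : ℤ)

/-- let `c` be a multiterminal cut partition, let `u, v` be
adjacent non-terminal vertices in the same block `j`, and let `i ≠ j` be a
block attaining the maximum gain `g(u) = gain u i` and `g(v) = gain v i` for
both `u` and `v`. If `g(u) + g(v) + 2 · w(u,v) > 0`, then moving both `u` and
`v` to block `i` yields a multiterminal cut partition whose weight equals the
weight of `c` minus `g(u) + g(v) + 2 · w(u,v)`; in particular it is strictly
smaller. -/


lemma two_mul_sum_sym2 {V : Type*} [Fintype V] [DecidableEq V] (f : Sym2 V → ℕ)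
    (hf : ∀ x, f s(x, x) = 0) :
    2 * ∑ p ∈ Finset.univ.sym2, f p = ∑ x : V, ∑ y : V, f s(x, y) := by
  have himg : (Finset.univ : Finset V).offDiag.image Sym2.mk.uncurry
      = (Finset.univ : Finset V).sym2.filter (fun p => ¬ p.IsDiag) := by
    ext p
    induction p using Sym2.ind with
    | _ a b =>
      rw [Finset.mem_image, Finset.mem_filter]
      constructor
      · rintro ⟨⟨x, y⟩, hxy, h⟩
        rw [Finset.mem_offDiag] at hxy
        refine ⟨by simp, ?_⟩
        rw [← h]
        simpa using hxy.2.2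
      · rintro ⟨-, h⟩
        have hab : a ≠ b := by simpa using h
        exact ⟨(a, b), Finset.mem_offDiag.2 ⟨Finset.mem_univ _, Finset.mem_univ _, hab⟩, rfl⟩
  have hfiber : ∀ p ∈ (Finset.univ : Finset V).offDiag.image Sym2.mk.uncurry,
      ((Finset.univ : Finset V).offDiag.filter (fun a => Sym2.mk.uncurry a = p)).card = 2 := by
    intro p hp
    induction p using Sym2.ind with
    | _ a b =>
      have hab : a ≠ b := by
        rw [himg, Finset.mem_filter] at hp
        simpa using hp.2
      have hset : ((Finset.univ : Finset V).offDiag.filter (fun x => Sym2.mk.uncurry x = s(a,b)))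
          = {(a, b), (b, a)} := by
        ext ⟨x, y⟩
        rw [Finset.mem_filter, Finset.mem_offDiag, Finset.mem_insert, Finset.mem_singleton,
          Prod.ext_iff, Prod.ext_iff]
        constructor
        · rintro ⟨-, h⟩
          rw [Function.uncurry_apply_pair, Sym2.eq_iff] at h
          exact h
        · rintro (⟨rfl, rfl⟩ | ⟨rfl, rfl⟩)
          · exact ⟨⟨Finset.mem_univ _, Finset.mem_univ _, hab⟩, rfl⟩
          · exact ⟨⟨Finset.mem_univ _, Finset.mem_univ _, hab.symm⟩, Sym2.eq_swap⟩
      rw [hset, Finset.card_insert_of_notMem (by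
        rw [Finset.mem_singleton, Prod.ext_iff]
        rintro ⟨h, -⟩; exact hab h), Finset.card_singleton]
  calc 2 * ∑ p ∈ Finset.univ.sym2, f p
      = 2 * ∑ p ∈ (Finset.univ : Finset V).sym2.filter (fun p => ¬ p.IsDiag), f p := by
        congr 1
        rw [← Finset.sum_filter_add_sum_filter_not _ (fun p => ¬ p.IsDiag)]
        have h0 : ∑ p ∈ (Finset.univ : Finset V).sym2.filter (fun p => ¬¬ p.IsDiag), f p = 0 := by
          apply Finset.sum_eq_zero
          intro p hp
          induction p using Sym2.ind with
          | _ a b =>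
            have : a = b := by
              have := (Finset.mem_filter.1 hp).2
              simpa using this
            subst this; exact hf a
        omega
    _ = ∑ a ∈ (Finset.univ : Finset V).offDiag, f (Sym2.mk.uncurry a) := by
        rw [Finset.sum_comp f Sym2.mk.uncurry, ← himg, Finset.mul_sum]
        exact Finset.sum_congr rfl fun p hp => by rw [hfiber p hp, smul_eq_mul]
    _ = ∑ a ∈ (Finset.univ : Finset V) ×ˢ (Finset.univ : Finset V), f (Sym2.mk.uncurry a) := by
        rw [← Finset.diag_union_offDiag, Finset.sum_union (Finset.disjoint_diag_offDiag _),
          Finset.sum_diag]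
        simp [hf]
    _ = ∑ x : V, ∑ y : V, f s(x, y) := by
        rw [← Finset.sum_product']; rfl


lemma pair_double_sum {V : Type*} [Fintype V] [DecidableEq V] (D : V → V → ℤ) (u v : V)
    (huv : u ≠ v) (hsym : ∀ x y, D x y = D y x)
    (h0 : ∀ x y, x ≠ u → x ≠ v → y ≠ u → y ≠ v → D x y = 0)
    (huu : D u u = 0) (hvv : D v v = 0) (huv0 : D u v = 0) :
    ∑ x : V, ∑ y : V, D x y
      = 2 * ∑ y ∈ Finset.univ.filter (fun y => y ≠ u ∧ y ≠ v), D u y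
      + 2 * ∑ y ∈ Finset.univ.filter (fun y => y ≠ u ∧ y ≠ v), D v y := by
  set Sf := Finset.univ.filter (fun y : V => y ≠ u ∧ y ≠ v) with hSf
  have hmem : ∀ y ∈ Sf, y ≠ u ∧ y ≠ v := fun y hy => by
    simpa [hSf] using (Finset.mem_filter.1 hy).2
  have hnu : u ∉ insert v Sf := by simp [hSf, huv]
  have hnv : v ∉ Sf := by simp [hSf]
  have huniv : (Finset.univ : Finset V) = insert u (insert v Sf) := by
    ext x
    simp only [Finset.mem_univ, true_iff, Finset.mem_insert, hSf, Finset.mem_filter, true_and]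
    tauto
  have hinner : ∀ x, ∑ y : V, D x y = D x u + D x v + ∑ y ∈ Sf, D x y := by
    intro x
    rw [huniv, Finset.sum_insert hnu, Finset.sum_insert hnv]
    ring
  have hcolu : ∑ x : V, D x u = D u u + D v u + ∑ x ∈ Sf, D u x := by
    rw [huniv, Finset.sum_insert hnu, Finset.sum_insert hnv,
      Finset.sum_congr rfl (fun x _ => hsym x u)]
    ring
  have hcolv : ∑ x : V, D x v = D u v + D v v + ∑ x ∈ Sf, D v x := by
    rw [huniv, Finset.sum_insert hnu, Finset.sum_insert hnv,
      Finset.sum_congr rfl (fun x _ => hsym x v)]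
    ring
  have hrest : ∑ x : V, ∑ y ∈ Sf, D x y
      = (∑ y ∈ Sf, D u y) + ∑ y ∈ Sf, D v y := by
    rw [huniv, Finset.sum_insert hnu, Finset.sum_insert hnv]
    have : ∑ x ∈ Sf, ∑ y ∈ Sf, D x y = 0 := by
      apply Finset.sum_eq_zero
      intro x hx
      apply Finset.sum_eq_zero
      intro y hy
      exact h0 x y (hmem x hx).1 (hmem x hx).2 (hmem y hy).1 (hmem y hy).2
    rw [this]
    ring
  have hvu0 : D v u = 0 := (hsym v u).trans huv0
  calc ∑ x : V, ∑ y : V, D x y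
      = ∑ x : V, (D x u + D x v + ∑ y ∈ Sf, D x y) :=
        Finset.sum_congr rfl fun x _ => hinner x
    _ = (∑ x : V, D x u) + (∑ x : V, D x v) + ∑ x : V, ∑ y ∈ Sf, D x y := by
        rw [Finset.sum_add_distrib, Finset.sum_add_distrib]
    _ = 2 * ∑ y ∈ Sf, D u y + 2 * ∑ y ∈ Sf, D v y := by
        rw [hcolu, hcolv, hrest, huu, hvv, huv0, hvu0]
        ring


lemma two_mul_mtcWeight {V : Type*} [Fintype V] [DecidableEq V] {k : ℕ}
    (w : Sym2 V → ℕ) (c : V → Fin k) :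
    2 * mtcWeight w c = ∑ x : V, ∑ y : V, (if c x = c y then 0 else w s(x, y)) := by
  rw [mtcWeight, two_mul_sum_sym2 _ (by intro x; simp)]
  refine Finset.sum_congr rfl fun x _ => Finset.sum_congr rfl fun y _ => ?_
  simp [Sym2.mk_isDiag_iff]

theorem pair_move_gain
    {V : Type*} [Fintype V] [DecidableEq V] {k : ℕ} (hk : 2 ≤ k)
    (w : Sym2 V → ℕ) (hloopless : ∀ x, w (Sym2.diag x) = 0)
    (t : Fin k → V) (ht : Function.Injective t)
    (c : V → Fin k) (hc : ∀ l, c (t l) = l)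
    (u v : V) (huv : u ≠ v)
    (hut : ∀ l, t l ≠ u) (hvt : ∀ l, t l ≠ v)
    (hadj : 0 < w s(u, v))
    (j : Fin k) (hcu : c u = j) (hcv : c v = j)
    (i : Fin k) (hij : i ≠ j)
    (hmaxu : ∀ l, l ≠ c u → gain w c u l ≤ gain w c u i)
    (hmaxv : ∀ l, l ≠ c v → gain w c v l ≤ gain w c v i)
    (hpos : 0 < gain w c u i + gain w c v i + 2 * (w s(u, v) : ℤ)) :
    (∀ l, (fun x => if x = u ∨ x = v then i else c x) (t l) = l) ∧
    (mtcWeight w (fun x => if x = u ∨ x = v then i else c x) : ℤ)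
      = (mtcWeight w c : ℤ)
        - (gain w c u i + gain w c v i + 2 * (w s(u, v) : ℤ)) ∧
    mtcWeight w (fun x => if x = u ∨ x = v then i else c x) < mtcWeight w c := by
  set c' : V → Fin k := fun x => if x = u ∨ x = v then i else c x with hc'def
  have hcu' : c' u = i := by simp [hc'def]
  have hcv' : c' v = i := by simp [hc'def]
  have hfix : ∀ y, y ≠ u → y ≠ v → c' y = c y := by
    intro y h1 h2; simp [hc'def, h1, h2]
  have hterm : ∀ l, c' (t l) = l := by
    intro l; rw [hfix _ (hut l) (hvt l)]; exact hc l
  have hciu : c u ≠ i := by rw [hcu]; exact fun h => hij h.symm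
  have hciv : c v ≠ i := by rw [hcv]; exact fun h => hij h.symm
  -- the difference function
  set D : V → V → ℤ := fun x y =>
    (if c x = c y then 0 else (w s(x, y) : ℤ))
      - (if c' x = c' y then 0 else (w s(x, y) : ℤ)) with hDdef
  have hsym : ∀ x y, D x y = D y x := by
    intro x y
    have hsw : s(x, y) = s(y, x) := Sym2.eq_swap
    simp only [hDdef, hsw]
    congr 1 <;> exact if_congr eq_comm rfl rfl
  have h0 : ∀ x y, x ≠ u → x ≠ v → y ≠ u → y ≠ v → D x y = 0 := by
    intro x y hxu hxv hyu hyv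
    simp only [hDdef, hfix x hxu hxv, hfix y hyu hyv, sub_self]
  have huu : D u u = 0 := by simp [hDdef]
  have hvv : D v v = 0 := by simp [hDdef]
  have huv0 : D u v = 0 := by
    have h1 : c u = c v := hcu.trans hcv.symm
    have h2 : c' u = c' v := hcu'.trans hcv'.symm
    simp [hDdef, h1, h2]
  have hbw : ∀ (x : V) (l : Fin k), (blockWeight w c x l : ℤ)
      = ∑ y ∈ Finset.univ.filter (fun y => c y = l ∧ y ≠ x), (w s(x, y) : ℤ) := by
    intro x l
    rw [blockWeight]
    push_cast
    rfl
  -- the half-row sum, stated symmetrically in `a`, `b`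
  have hAu : ∀ (a b : V), a ≠ b → c a = j → c b = j → c' a = i →
      (∀ y, y ≠ a → y ≠ b → c' y = c y) →
      ∑ y ∈ Finset.univ.filter (fun y => y ≠ a ∧ y ≠ b), D a y
        = gain w c a i + (w s(a, b) : ℤ) := by
    intro a b hab hca hcb hca' hfixab
    have hcia : c a ≠ i := by rw [hca]; exact fun h => hij h.symm
    have hcib : c b ≠ i := by rw [hcb]; exact fun h => hij h.symm
    have h1 : ∑ y ∈ Finset.univ.filter (fun y => y ≠ a ∧ y ≠ b), D a y
        = (∑ y ∈ (Finset.univ.filter (fun y : V => y ≠ a ∧ y ≠ b)).filter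
              (fun y => c y = i), (w s(a, y) : ℤ))
          - ∑ y ∈ (Finset.univ.filter (fun y : V => y ≠ a ∧ y ≠ b)).filter
              (fun y => c y = j), (w s(a, y) : ℤ) := by
      have e1 := Finset.sum_filter (fun y : V => c y = i)
        (fun y => (w s(a, y) : ℤ)) (s := Finset.univ.filter (fun y : V => y ≠ a ∧ y ≠ b))
      have e2 := Finset.sum_filter (fun y : V => c y = j)
        (fun y => (w s(a, y) : ℤ)) (s := Finset.univ.filter (fun y : V => y ≠ a ∧ y ≠ b))
      rw [e1, e2, ← Finset.sum_sub_distrib]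
      refine Finset.sum_congr rfl fun y hy => ?_
      have hy' := Finset.mem_filter.1 hy
      have hcy' : c' y = c y := hfixab y hy'.2.1 hy'.2.2
      simp only [hDdef, hcy', hca, hca']
      by_cases h1 : c y = i
      · have hj : c y ≠ j := by rw [h1]; exact hij
        rw [if_neg (fun h : j = c y => hj h.symm), if_pos h1.symm, if_pos h1, if_neg hj]
      · by_cases h2 : c y = j
        · rw [if_pos h2.symm, if_neg (fun h : i = c y => h1 h.symm), if_neg h1, if_pos h2]
        · rw [if_neg (fun h : j = c y => h2 h.symm), if_neg (fun h : i = c y => h1 h.symm),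
            if_neg h1, if_neg h2]
          ring
    have hseti : (Finset.univ.filter (fun y : V => y ≠ a ∧ y ≠ b)).filter (fun y => c y = i)
        = Finset.univ.filter (fun y => c y = i ∧ y ≠ a) := by
      ext y
      simp only [Finset.mem_filter, Finset.mem_univ, true_and]
      constructor
      · rintro ⟨⟨hyu, hyv⟩, hyi⟩
        exact ⟨hyi, hyu⟩
      · rintro ⟨hyi, -⟩
        refine ⟨⟨?_, ?_⟩, hyi⟩
        · rintro rfl; exact hcia hyi
        · rintro rfl; exact hcib hyi
    have hbmem : b ∈ Finset.univ.filter (fun y : V => c y = j ∧ y ≠ a) := by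
      simp only [Finset.mem_filter, Finset.mem_univ, true_and]
      exact ⟨hcb, fun h => hab h.symm⟩
    have hsetj : (Finset.univ.filter (fun y : V => y ≠ a ∧ y ≠ b)).filter (fun y => c y = j)
        = (Finset.univ.filter (fun y : V => c y = j ∧ y ≠ a)).erase b := by
      ext y
      simp only [Finset.mem_filter, Finset.mem_univ, true_and, Finset.mem_erase]
      constructor
      · rintro ⟨⟨hyu, hyv⟩, hyj⟩
        exact ⟨hyv, hyj, hyu⟩
      · rintro ⟨hyb, hyj, hya⟩
        exact ⟨⟨hya, hyb⟩, hyj⟩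
    have herase : ∑ y ∈ (Finset.univ.filter (fun y : V => c y = j ∧ y ≠ a)).erase b,
        (w s(a, y) : ℤ)
        = (∑ y ∈ Finset.univ.filter (fun y : V => c y = j ∧ y ≠ a), (w s(a, y) : ℤ))
          - (w s(a, b) : ℤ) := by
      rw [Finset.sum_erase_eq_sub hbmem]
    rw [h1, hseti, hsetj, herase, ← hbw, ← hbw, gain, hca]
    ring
  -- double count
  have hdc : ∀ c₀ : V → Fin k, (2 : ℤ) * (mtcWeight w c₀ : ℤ)
      = ∑ x : V, ∑ y : V, (if c₀ x = c₀ y then 0 else (w s(x, y) : ℤ)) := by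
    intro c₀
    have h2 : ((2 * mtcWeight w c₀ : ℕ) : ℤ)
        = ((∑ x : V, ∑ y : V, (if c₀ x = c₀ y then 0 else w s(x, y)) : ℕ) : ℤ) := by
      exact_mod_cast congrArg (Nat.cast : ℕ → ℤ) (two_mul_mtcWeight w c₀)
    push_cast at h2
    convert h2 using 2
  have hfe : Finset.univ.filter (fun y : V => y ≠ v ∧ y ≠ u)
      = Finset.univ.filter (fun y : V => y ≠ u ∧ y ≠ v) := by
    ext y; simp [and_comm]
  have hAv' : ∑ y ∈ Finset.univ.filter (fun y : V => y ≠ u ∧ y ≠ v), D v y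
      = gain w c v i + (w s(u, v) : ℤ) := by
    rw [← hfe, hAu v u huv.symm hcv hcu hcv'
      (fun y h1 h2 => hfix y h2 h1)]
    rw [Sym2.eq_swap]
  have hkey : (2 : ℤ) * (mtcWeight w c : ℤ) - 2 * (mtcWeight w c' : ℤ)
      = 2 * (gain w c u i + gain w c v i + 2 * (w s(u, v) : ℤ)) := by
    rw [hdc c, hdc c', ← Finset.sum_sub_distrib]
    have hstep : ∑ x : V, ((∑ y : V, (if c x = c y then 0 else (w s(x, y) : ℤ)))
        - ∑ y : V, (if c' x = c' y then 0 else (w s(x, y) : ℤ)))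
        = ∑ x : V, ∑ y : V, D x y := by
      refine Finset.sum_congr rfl fun x _ => ?_
      rw [← Finset.sum_sub_distrib]
    rw [hstep, pair_double_sum D u v huv hsym h0 huu hvv huv0,
      hAu u v huv hcu hcv hcu' hfix, hAv']
    ring
  have heq : (mtcWeight w c' : ℤ)
      = (mtcWeight w c : ℤ) - (gain w c u i + gain w c v i + 2 * (w s(u, v) : ℤ)) := by
    linarith
  refine ⟨hterm, heq, ?_⟩
  have hlt : (mtcWeight w c' : ℤ) < (mtcWeight w c : ℤ) := by linarith
  exact_mod_cast hlt
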